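/- Let x₀, Δ, d be positive integers and S an integer such that gcd(x₀^d, S) divides Δ^d. If x₀^d divides x·S for a positive integer x, then x₁^d divides x, where x₁ = x₀/gcd(x₀,Δ). -/

import Mathlib

lemma aux_gcd_pow (a b k : ℕ) : Nat.gcd (a ^ k) (b ^ k) = Nat.gcd a b ^ k := by
  rcases Nat.eq_zero_or_pos (Nat.gcd a b) with h | h
  · obtain ⟨ha, hb⟩ := Nat.gcd_eq_zero_iff.mp h
    subst ha hb; simp
  · have hcop : Nat.Coprime (a / Nat.gcd a b) (b / Nat.gcd a b) :=
      Nat.coprime_div_gcd_div_gcd h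
    have ha : Nat.gcd a b * (a / Nat.gcd a b) = a := Nat.mul_div_cancel' (Nat.gcd_dvd_left a b)
    have hb : Nat.gcd a b * (b / Nat.gcd a b) = b := Nat.mul_div_cancel' (Nat.gcd_dvd_right a b)
    have key : ∀ G a' b' : ℕ, Nat.Coprime a' b' →
        Nat.gcd ((G * a') ^ k) ((G * b') ^ k) = Nat.gcd (G * a') (G * b') ^ k := by
      intro G a' b' hc
      rw [mul_pow, mul_pow, Nat.gcd_mul_left, Nat.gcd_mul_left, hc.gcd_eq_one,
        Nat.Coprime.gcd_eq_one (Nat.Coprime.pow k k hc), mul_one, mul_one]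
    have := key (Nat.gcd a b) (a / Nat.gcd a b) (b / Nat.gcd a b) hcop
    rw [ha, hb] at this
    exact this

lemma aux_div_dvd_div {g g' n : ℕ} (h : g ∣ g') (h2 : g' ∣ n) (hg : 0 < g') :
    n / g' ∣ n / g := by
  refine ⟨g' / g, ?_⟩
  rw [Nat.div_mul_div_comm h2 h, mul_comm g' g, Nat.mul_div_mul_right _ _ hg]

theorem stmt_18 (x₀ Δ d x : ℕ) (hx₀ : 0 < x₀) (hΔ : 0 < Δ) (hd : 0 < d) (hx : 0 < x)
    (S : ℤ)
    (hgcd : (Int.gcd ((x₀ : ℤ) ^ d) S : ℕ) ∣ Δ ^ d)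
    (hdvd : ((x₀ : ℤ) ^ d) ∣ (x : ℤ) * S) :
    (x₀ / Nat.gcd x₀ Δ) ^ d ∣ x := by
  set s := S.natAbs with hs
  have hgcd' : Nat.gcd (x₀ ^ d) s ∣ Δ ^ d := by
    have : Int.gcd ((x₀ : ℤ) ^ d) S = Nat.gcd (x₀ ^ d) s := by
      rw [Int.gcd]; simp [Int.natAbs_pow, hs]
    rwa [this] at hgcd
  have hdvd' : x₀ ^ d ∣ x * s := by
    have := Int.natAbs_dvd_natAbs.mpr hdvd
    simpa [Int.natAbs_mul, Int.natAbs_pow] using this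
  set g := Nat.gcd (x₀ ^ d) s with hgdef
  have hx0d : 0 < x₀ ^ d := Nat.pow_pos hx₀
  have hgpos : 0 < g := Nat.gcd_pos_of_pos_left _ hx0d
  have step1 : x₀ ^ d / g ∣ x := by
    have hcop : Nat.Coprime (x₀ ^ d / g) (s / g) := Nat.coprime_div_gcd_div_gcd hgpos
    have ha : g * (x₀ ^ d / g) = x₀ ^ d := Nat.mul_div_cancel' (Nat.gcd_dvd_left _ _)
    have hb : g * (s / g) = s := Nat.mul_div_cancel' (Nat.gcd_dvd_right _ _)
    have hab : x₀ ^ d / g ∣ x * (s / g) := by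
      have h1 : g * (x₀ ^ d / g) ∣ g * (x * (s / g)) := by
        rw [ha, show g * (x * (s / g)) = x * (g * (s / g)) by ring, hb]
        exact hdvd'
      exact (Nat.mul_dvd_mul_iff_left hgpos).mp h1
    exact Nat.Coprime.dvd_of_dvd_mul_right hcop hab
  have hG : Nat.gcd x₀ Δ ∣ x₀ := Nat.gcd_dvd_left _ _
  have hGpos : 0 < Nat.gcd x₀ Δ := Nat.gcd_pos_of_pos_left _ hx₀
  have hgdvd : g ∣ Nat.gcd x₀ Δ ^ d := by
    rw [← aux_gcd_pow]
    exact Nat.dvd_gcd (Nat.gcd_dvd_left _ _) hgcd'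
  have hGd : Nat.gcd x₀ Δ ^ d ∣ x₀ ^ d := pow_dvd_pow_of_dvd hG d
  have hGdpos : 0 < Nat.gcd x₀ Δ ^ d := Nat.pow_pos hGpos
  have step2 : (x₀ / Nat.gcd x₀ Δ) ^ d ∣ x₀ ^ d / g := by
    rw [Nat.div_pow hG]
    exact aux_div_dvd_div hgdvd hGd hGdpos
  exact step2.trans step1
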